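/- The following are equivalent for a set X ⊆ ℕ: (i) X computes a diagonally non-computable function; (ii) for every uniformly computably enumerable family (X_e) of finite sets, X computes a function h : ℕ × ℕ → ℕ such that whenever |X_e| ≤ n, h(e,n) ∉ X_e; (iii) for every partial computable function g, X computes a total function f with f(x) ≠ g(x) whenever g(x) is defined. -/

import Mathlib

open Classical Filter

noncomputable section

/-- Codes for partial functions recursive in an oracle. -/
inductive OCode : Type
  | zero | succ | left | right | oracle
  | pair (a b : OCode) | comp (a b : OCode) | prec (a b : OCode) | rfind' (a : OCode)

/-- Evaluation of an oracle code with oracle `O`. -/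
def OCode.eval (O : ℕ →. ℕ) : OCode → ℕ →. ℕ
  | .zero => pure 0
  | .succ => Nat.succ
  | .left => ↑fun n : ℕ => n.unpair.1
  | .right => ↑fun n : ℕ => n.unpair.2
  | .oracle => O
  | .pair a b => fun n => Nat.pair <$> a.eval O n <*> b.eval O n
  | .comp a b => fun n => b.eval O n >>= a.eval O
  | .prec a b => Nat.unpaired fun m n =>
      n.rec (a.eval O m) fun y IH => do let i ← IH; b.eval O (Nat.pair m (Nat.pair y i))
  | .rfind' a => fun n => Nat.rfind fun m => (fun k => k = 0) <$> a.eval O (Nat.pair n m)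

/-- An injective numbering of oracle codes. -/
def OCode.encodeC : OCode → ℕ
  | .zero => Nat.pair 0 0
  | .succ => Nat.pair 1 0
  | .left => Nat.pair 2 0
  | .right => Nat.pair 3 0
  | .oracle => Nat.pair 4 0
  | .pair a b => Nat.pair 5 (Nat.pair a.encodeC b.encodeC)
  | .comp a b => Nat.pair 6 (Nat.pair a.encodeC b.encodeC)
  | .prec a b => Nat.pair 7 (Nat.pair a.encodeC b.encodeC)
  | .rfind' a => Nat.pair 8 a.encodeC

/-- `f` is partial recursive in the oracle `O`. -/
def RecIn (O : ℕ →. ℕ) (f : ℕ →. ℕ) : Prop := ∃ c : OCode, c.eval O = f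

/-- The `e`-th partial function recursive in `O` (`Φ_e^O`). -/
def phi (O : ℕ →. ℕ) (e : ℕ) : ℕ →. ℕ :=
  if h : ∃ c : OCode, c.encodeC = e then h.choose.eval O else fun _ => Part.none

/-- The characteristic function of a set of naturals, as an oracle. -/
def chOracle (X : Set ℕ) : ℕ →. ℕ := fun n => Part.some (if n ∈ X then 1 else 0)

/-- A total function as an oracle. -/
def fnOracle (f : ℕ → ℕ) : ℕ →. ℕ := fun n => Part.some (f n)

/-- A two-variable total function as an oracle. -/
def pairFnOracle (f : ℕ → ℕ → ℕ) : ℕ →. ℕ :=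
  fun n => Part.some (f n.unpair.1 n.unpair.2)

/-- The Turing jump of a set `X` : the halting problem relative to `X`. -/
def jumpSet (X : Set ℕ) : Set ℕ := {e | (phi (chOracle X) e e).Dom}

/-- The effective join of two sets of naturals. -/
def joinSet (A B : Set ℕ) : Set ℕ :=
  {n | (n % 2 = 0 ∧ n / 2 ∈ A) ∨ (n % 2 = 1 ∧ n / 2 ∈ B)}

/-- The join of two oracles. -/
def joinO (O₁ O₂ : ℕ →. ℕ) : ℕ →. ℕ :=
  fun n => if n % 2 = 0 then O₁ (n / 2) else O₂ (n / 2)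

/-- Turing reducibility between sets of naturals. -/
def setLEset (A B : Set ℕ) : Prop :=
  RecIn (chOracle B) (fnOracle fun n => if n ∈ A then 1 else 0)



namespace DNCwork

open Nat.Partrec (Code)
open Nat.Partrec.Code

theorem pbind_some (x : ℕ) (g : ℕ →. ℕ) : Part.some x >>= g = g x := Part.bind_some _ _
theorem pbind_some' (x : ℕ) (g : ℕ →. ℕ) : (Part.some x).bind g = g x := Part.bind_some _ _

/-! ### Basic facts about `OCode` -/

theorem encodeC_inj : Function.Injective OCode.encodeC := by
  intro c d h
  induction c generalizing d <;> cases d <;>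
    simp_all [OCode.encodeC, Nat.pair_eq_pair] <;>
    aesop

theorem phi_encodeC (O : ℕ →. ℕ) (c : OCode) : phi O c.encodeC = c.eval O := by
  rw [phi]; refine (dif_pos ⟨c, rfl⟩).trans ?_
  exact congrArg (fun d : OCode => d.eval O)
    (encodeC_inj (Exists.choose_spec (⟨c, rfl⟩ : ∃ d : OCode, d.encodeC = c.encodeC)))

/-- Translation to `Nat.Partrec.Code`, valid for the empty oracle. -/
def toC : OCode → Code
  | .zero => Code.zero
  | .succ => Code.succ
  | .left => Code.left
  | .right => Code.right
  | .oracle => Code.zero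
  | .pair a b => Code.pair (toC a) (toC b)
  | .comp a b => Code.comp (toC a) (toC b)
  | .prec a b => Code.prec (toC a) (toC b)
  | .rfind' a => Code.comp (Code.rfind' (toC a)) (Code.pair Code.id Code.zero)

theorem chOracle_empty : chOracle ∅ = fun _ => Part.some 0 := by
  funext n; simp [chOracle]

theorem eval_toC : ∀ c : OCode, c.eval (chOracle ∅) = (toC c).eval
  | .zero => rfl
  | .succ => rfl
  | .left => rfl
  | .right => rfl
  | .oracle => by
      funext n; simp [toC, OCode.eval, Code.eval, chOracle_empty]; rfl
  | .pair a b => by simp [toC, OCode.eval, Code.eval, eval_toC a, eval_toC b]; rfl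
  | .comp a b => by simp [toC, OCode.eval, Code.eval, eval_toC a, eval_toC b]; rfl
  | .prec a b => by simp [toC, OCode.eval, Code.eval, eval_toC a, eval_toC b]; rfl
  | .rfind' a => by
      rw [show OCode.eval (chOracle ∅) (.rfind' a)
        = fun n => Nat.rfind fun m => (fun k => k = 0) <$> a.eval (chOracle ∅) (Nat.pair n m)
        from rfl, eval_toC a]
      simp [toC, Code.eval, Seq.seq, pure, PFun.pure, Part.map_id']; rfl

/-- Substituting a code for the oracle. -/
def osubst (d : OCode) : OCode → OCode
  | .zero => .zero
  | .succ => .succ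
  | .left => .left
  | .right => .right
  | .oracle => d
  | .pair a b => .pair (osubst d a) (osubst d b)
  | .comp a b => .comp (osubst d a) (osubst d b)
  | .prec a b => .prec (osubst d a) (osubst d b)
  | .rfind' a => .rfind' (osubst d a)

theorem eval_osubst (O : ℕ →. ℕ) (d : OCode) :
    ∀ c : OCode, (osubst d c).eval O = c.eval (d.eval O)
  | .zero => rfl
  | .succ => rfl
  | .left => rfl
  | .right => rfl
  | .oracle => rfl
  | .pair a b => by simp [osubst, OCode.eval, eval_osubst O d a, eval_osubst O d b]; rfl
  | .comp a b => by simp [osubst, OCode.eval, eval_osubst O d a, eval_osubst O d b]; rfl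
  | .prec a b => by simp [osubst, OCode.eval, eval_osubst O d a, eval_osubst O d b]; rfl
  | .rfind' a => by
      show OCode.eval O (.rfind' (osubst d a)) = _
      rw [show OCode.eval O (.rfind' (osubst d a))
        = fun n => Nat.rfind fun m => (fun k => k = 0) <$>
            (osubst d a).eval O (Nat.pair n m) from rfl, eval_osubst O d a]
      rfl

/-! ### Closure properties of `RecIn` -/

theorem recIn_of_partrec {O : ℕ →. ℕ} {f : ℕ →. ℕ} (hf : Nat.Partrec f) : RecIn O f := by
  induction hf with
  | zero => exact ⟨.zero, rfl⟩
  | succ => exact ⟨.succ, rfl⟩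
  | left => exact ⟨.left, rfl⟩
  | right => exact ⟨.right, rfl⟩
  | pair _ _ hf hg =>
      obtain ⟨cf, rfl⟩ := hf; obtain ⟨cg, rfl⟩ := hg; exact ⟨.pair cf cg, rfl⟩
  | comp _ _ hf hg =>
      obtain ⟨cf, rfl⟩ := hf; obtain ⟨cg, rfl⟩ := hg; exact ⟨.comp cf cg, rfl⟩
  | prec _ _ hf hg =>
      obtain ⟨cf, rfl⟩ := hf; obtain ⟨cg, rfl⟩ := hg; exact ⟨.prec cf cg, rfl⟩
  | rfind _ hf =>
      obtain ⟨cf, rfl⟩ := hf; exact ⟨.rfind' cf, rfl⟩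

theorem recIn_trans {O A : ℕ →. ℕ} {g : ℕ →. ℕ} (hg : RecIn A g) (hA : RecIn O A) :
    RecIn O g := by
  obtain ⟨c, hc⟩ := hg; obtain ⟨d, hd⟩ := hA
  exact ⟨osubst d c, by rw [eval_osubst, hd, hc]⟩

theorem partrec_of_recIn_empty {g : ℕ →. ℕ} (h : RecIn (chOracle ∅) g) : Nat.Partrec g := by
  obtain ⟨c, hc⟩ := h
  exact exists_code.2 ⟨toC c, by rw [← eval_toC, hc]⟩

theorem recIn_fn_comp {O : ℕ →. ℕ} {f g : ℕ → ℕ} (hf : RecIn O (fnOracle f))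
    (hg : RecIn O (fnOracle g)) : RecIn O (fnOracle fun n => f (g n)) := by
  obtain ⟨c, hc⟩ := hf; obtain ⟨d, hd⟩ := hg
  refine ⟨.comp c d, ?_⟩
  funext n
  simp [OCode.eval, hc, hd, fnOracle, pbind_some]

theorem recIn_fnOracle_of_computable {O : ℕ →. ℕ} {f : ℕ → ℕ} (hf : Computable f) :
    RecIn O (fnOracle f) := by
  have : Nat.Partrec (fnOracle f) := Partrec.nat_iff.1 (hf.partrec.of_eq (by intro n; rfl))
  exact recIn_of_partrec this

/-! ### A computable decoder for `encodeC` -/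

theorem lt_pair_of_pos {t p : ℕ} (h : 0 < t) : p < Nat.pair t p := by
  rw [Nat.pair]
  split
  · nlinarith
  · nlinarith

theorem unpair1_lt {e : ℕ} (h : 0 < e.unpair.1) : e.unpair.2.unpair.1 < e :=
  lt_of_le_of_lt (Nat.unpair_left_le _) (by
    conv_rhs => rw [← Nat.pair_unpair e]
    exact lt_pair_of_pos h)

theorem unpair2_lt {e : ℕ} (h : 0 < e.unpair.1) : e.unpair.2.unpair.2 < e :=
  lt_of_le_of_lt (Nat.unpair_right_le _) (by
    conv_rhs => rw [← Nat.pair_unpair e]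
    exact lt_pair_of_pos h)

theorem unpair_snd_lt {e : ℕ} (h : 0 < e.unpair.1) : e.unpair.2 < e := by
  conv_rhs => rw [← Nat.pair_unpair e]
  exact lt_pair_of_pos h

/-- Decoding a natural number to (the `Code` translation of) the `OCode` it encodes. -/
def ocDec (e : ℕ) : Option Code :=
  if e.unpair.1 = 0 ∨ e.unpair.1 = 4 then if e.unpair.2 = 0 then some Code.zero else none
  else if e.unpair.1 = 1 then if e.unpair.2 = 0 then some Code.succ else none
  else if e.unpair.1 = 2 then if e.unpair.2 = 0 then some Code.left else none
  else if e.unpair.1 = 3 then if e.unpair.2 = 0 then some Code.right else none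
  else if e.unpair.1 = 5 then
    (ocDec e.unpair.2.unpair.1).bind fun a =>
      (ocDec e.unpair.2.unpair.2).map fun b => Code.pair a b
  else if e.unpair.1 = 6 then
    (ocDec e.unpair.2.unpair.1).bind fun a =>
      (ocDec e.unpair.2.unpair.2).map fun b => Code.comp a b
  else if e.unpair.1 = 7 then
    (ocDec e.unpair.2.unpair.1).bind fun a =>
      (ocDec e.unpair.2.unpair.2).map fun b => Code.prec a b
  else if e.unpair.1 = 8 then
    (ocDec e.unpair.2).map fun a =>
      Code.comp (Code.rfind' a) (Code.pair Code.id Code.zero)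
  else none
termination_by e
decreasing_by
  all_goals first
    | exact unpair1_lt (by omega)
    | exact unpair2_lt (by omega)
    | exact unpair_snd_lt (by omega)

theorem ocDec_encodeC : ∀ c : OCode, ocDec c.encodeC = some (toC c) := by
  intro c
  induction c with
  | zero => rw [ocDec]; simp [OCode.encodeC, toC]
  | succ => rw [ocDec]; simp [OCode.encodeC, toC]
  | left => rw [ocDec]; simp [OCode.encodeC, toC]
  | right => rw [ocDec]; simp [OCode.encodeC, toC]
  | oracle => rw [ocDec]; simp [OCode.encodeC, toC]
  | pair a b iha ihb => rw [ocDec]; simp [OCode.encodeC, toC, iha, ihb]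
  | comp a b iha ihb => rw [ocDec]; simp [OCode.encodeC, toC, iha, ihb]
  | prec a b iha ihb => rw [ocDec]; simp [OCode.encodeC, toC, iha, ihb]
  | rfind' a iha => rw [ocDec]; simp [OCode.encodeC, toC, iha]

theorem ocDec_some : ∀ e : ℕ, ∀ k : Code, ocDec e = some k →
    ∃ c : OCode, c.encodeC = e ∧ toC c = k := by
  intro e
  induction e using Nat.strong_induction_on with
  | _ e IH =>
  intro k h
  rw [ocDec] at h
  by_cases h04 : e.unpair.1 = 0 ∨ e.unpair.1 = 4
  · rw [if_pos h04] at h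
    by_cases hp : e.unpair.2 = 0
    · rw [if_pos hp] at h
      cases Option.some.inj h
      rcases h04 with h0 | h0
      · exact ⟨.zero, by rw [← Nat.pair_unpair e, h0, hp]; exact ⟨rfl, rfl⟩⟩
      · exact ⟨.oracle, by rw [← Nat.pair_unpair e, h0, hp]; exact ⟨rfl, rfl⟩⟩
    · rw [if_neg hp] at h; cases h
  rw [if_neg h04] at h
  by_cases h1 : e.unpair.1 = 1
  · rw [if_pos h1] at h
    by_cases hp : e.unpair.2 = 0
    · rw [if_pos hp] at h
      cases Option.some.inj h
      exact ⟨.succ, by rw [← Nat.pair_unpair e, h1, hp]; exact ⟨rfl, rfl⟩⟩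
    · rw [if_neg hp] at h; cases h
  rw [if_neg h1] at h
  by_cases h2 : e.unpair.1 = 2
  · rw [if_pos h2] at h
    by_cases hp : e.unpair.2 = 0
    · rw [if_pos hp] at h
      cases Option.some.inj h
      exact ⟨.left, by rw [← Nat.pair_unpair e, h2, hp]; exact ⟨rfl, rfl⟩⟩
    · rw [if_neg hp] at h; cases h
  rw [if_neg h2] at h
  by_cases h3 : e.unpair.1 = 3
  · rw [if_pos h3] at h
    by_cases hp : e.unpair.2 = 0
    · rw [if_pos hp] at h
      cases Option.some.inj h
      exact ⟨.right, by rw [← Nat.pair_unpair e, h3, hp]; exact ⟨rfl, rfl⟩⟩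
    · rw [if_neg hp] at h; cases h
  rw [if_neg h3] at h
  by_cases h5 : e.unpair.1 = 5
  · rw [if_pos h5] at h
    obtain ⟨a, ha, hmap⟩ := Option.bind_eq_some_iff.1 h
    obtain ⟨b, hb, rfl⟩ := Option.map_eq_some_iff.1 hmap
    obtain ⟨ca, hca, rfl⟩ := IH _ (unpair1_lt (by omega)) _ ha
    obtain ⟨cb, hcb, rfl⟩ := IH _ (unpair2_lt (by omega)) _ hb
    refine ⟨.pair ca cb, ?_, rfl⟩
    rw [show (OCode.pair ca cb).encodeC = Nat.pair 5 (Nat.pair ca.encodeC cb.encodeC) from rfl,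
      hca, hcb, Nat.pair_unpair, ← h5, Nat.pair_unpair]
  rw [if_neg h5] at h
  by_cases h6 : e.unpair.1 = 6
  · rw [if_pos h6] at h
    obtain ⟨a, ha, hmap⟩ := Option.bind_eq_some_iff.1 h
    obtain ⟨b, hb, rfl⟩ := Option.map_eq_some_iff.1 hmap
    obtain ⟨ca, hca, rfl⟩ := IH _ (unpair1_lt (by omega)) _ ha
    obtain ⟨cb, hcb, rfl⟩ := IH _ (unpair2_lt (by omega)) _ hb
    refine ⟨.comp ca cb, ?_, rfl⟩
    rw [show (OCode.comp ca cb).encodeC = Nat.pair 6 (Nat.pair ca.encodeC cb.encodeC) from rfl,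
      hca, hcb, Nat.pair_unpair, ← h6, Nat.pair_unpair]
  rw [if_neg h6] at h
  by_cases h7 : e.unpair.1 = 7
  · rw [if_pos h7] at h
    obtain ⟨a, ha, hmap⟩ := Option.bind_eq_some_iff.1 h
    obtain ⟨b, hb, rfl⟩ := Option.map_eq_some_iff.1 hmap
    obtain ⟨ca, hca, rfl⟩ := IH _ (unpair1_lt (by omega)) _ ha
    obtain ⟨cb, hcb, rfl⟩ := IH _ (unpair2_lt (by omega)) _ hb
    refine ⟨.prec ca cb, ?_, rfl⟩
    rw [show (OCode.prec ca cb).encodeC = Nat.pair 7 (Nat.pair ca.encodeC cb.encodeC) from rfl,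
      hca, hcb, Nat.pair_unpair, ← h7, Nat.pair_unpair]
  rw [if_neg h7] at h
  by_cases h8 : e.unpair.1 = 8
  · rw [if_pos h8] at h
    obtain ⟨a, ha, rfl⟩ := Option.map_eq_some_iff.1 h
    obtain ⟨ca, hca, rfl⟩ := IH _ (unpair_snd_lt (by omega)) _ ha
    refine ⟨.rfind' ca, ?_, rfl⟩
    rw [show (OCode.rfind' ca).encodeC = Nat.pair 8 ca.encodeC from rfl, hca, ← h8,
      Nat.pair_unpair]
  rw [if_neg h8] at h
  cases h

/-- A diverging code. -/
def divergeC : Code := Code.rfind' (Code.comp Code.succ Code.zero)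

theorem eval_divergeC : divergeC.eval = fun _ => Part.none := by
  funext n
  apply Part.eq_none_iff.2
  rintro a ha
  simp only [divergeC, Code.eval] at ha
  obtain ⟨b, hb, -⟩ := (Part.mem_map_iff _).1 ha
  have := Nat.rfind_spec hb
  simp [Code.eval, Seq.seq, pure, PFun.pure, pbind_some] at this

/-- The `e`-th code, matching `phi` on the empty oracle. -/
def dcode (e : ℕ) : Code := (ocDec e).getD divergeC

theorem eval_dcode (e : ℕ) : (dcode e).eval = phi (chOracle ∅) e := by
  by_cases h : ∃ c : OCode, c.encodeC = e
  · obtain ⟨c, rfl⟩ := h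
    rw [phi_encodeC, eval_toC, dcode, ocDec_encodeC]
    rfl
  · have hn : ocDec e = none := by
      cases hh : ocDec e with
      | none => rfl
      | some k =>
        obtain ⟨c, hc, -⟩ := ocDec_some _ _ hh
        exact absurd ⟨c, hc⟩ h
    rw [dcode, hn, phi]; refine Eq.trans ?_ (dif_neg h).symm
    exact eval_divergeC

/-! ### `ocDec` is primitive recursive -/

/-- One step of `ocDec`, with recursive calls replaced by list lookups. -/
def ocDecG (IH : List (Option Code)) : Option (Option Code) :=
  if IH.length.unpair.1 = 0 ∨ IH.length.unpair.1 = 4 then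
    some (if IH.length.unpair.2 = 0 then some Code.zero else none)
  else if IH.length.unpair.1 = 1 then
    some (if IH.length.unpair.2 = 0 then some Code.succ else none)
  else if IH.length.unpair.1 = 2 then
    some (if IH.length.unpair.2 = 0 then some Code.left else none)
  else if IH.length.unpair.1 = 3 then
    some (if IH.length.unpair.2 = 0 then some Code.right else none)
  else if IH.length.unpair.1 = 5 then
    some ((IH.getD IH.length.unpair.2.unpair.1 none).bind fun a =>
      (IH.getD IH.length.unpair.2.unpair.2 none).map fun b => Code.pair a b)
  else if IH.length.unpair.1 = 6 then
    some ((IH.getD IH.length.unpair.2.unpair.1 none).bind fun a =>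
      (IH.getD IH.length.unpair.2.unpair.2 none).map fun b => Code.comp a b)
  else if IH.length.unpair.1 = 7 then
    some ((IH.getD IH.length.unpair.2.unpair.1 none).bind fun a =>
      (IH.getD IH.length.unpair.2.unpair.2 none).map fun b => Code.prec a b)
  else if IH.length.unpair.1 = 8 then
    some ((IH.getD IH.length.unpair.2 none).map fun a =>
      Code.comp (Code.rfind' a) (Code.pair Code.id Code.zero))
  else some none

theorem getD_map_range {i n : ℕ} (h : i < n) :
    (((List.range n).map ocDec).getD i none) = ocDec i := by
  simp [List.getD_eq_getElem?_getD, List.getElem?_map, List.getElem?_range h]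

theorem ocDecG_spec (n : ℕ) : ocDecG ((List.range n).map ocDec) = some (ocDec n) := by
  have hlen : ((List.range n).map ocDec).length = n := by simp
  conv_rhs => rw [ocDec]
  rw [ocDecG, hlen]
  by_cases h04 : n.unpair.1 = 0 ∨ n.unpair.1 = 4
  · rw [if_pos h04, if_pos h04]
  rw [if_neg h04, if_neg h04]
  by_cases h1 : n.unpair.1 = 1
  · rw [if_pos h1, if_pos h1]
  rw [if_neg h1, if_neg h1]
  by_cases h2 : n.unpair.1 = 2
  · rw [if_pos h2, if_pos h2]
  rw [if_neg h2, if_neg h2]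
  by_cases h3 : n.unpair.1 = 3
  · rw [if_pos h3, if_pos h3]
  rw [if_neg h3, if_neg h3]
  by_cases h5 : n.unpair.1 = 5
  · rw [if_pos h5, if_pos h5,
      getD_map_range (unpair1_lt (by omega)), getD_map_range (unpair2_lt (by omega))]
  rw [if_neg h5, if_neg h5]
  by_cases h6 : n.unpair.1 = 6
  · rw [if_pos h6, if_pos h6,
      getD_map_range (unpair1_lt (by omega)), getD_map_range (unpair2_lt (by omega))]
  rw [if_neg h6, if_neg h6]
  by_cases h7 : n.unpair.1 = 7
  · rw [if_pos h7, if_pos h7,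
      getD_map_range (unpair1_lt (by omega)), getD_map_range (unpair2_lt (by omega))]
  rw [if_neg h7, if_neg h7]
  by_cases h8 : n.unpair.1 = 8
  · rw [if_pos h8, if_pos h8, getD_map_range (unpair_snd_lt (by omega))]
  rw [if_neg h8, if_neg h8]

open Primrec in
theorem ocDecG_primrec : Primrec ocDecG := by
  have hl : Primrec (@List.length (Option Code)) := list_length
  have ht : Primrec fun IH : List (Option Code) => IH.length.unpair.1 :=
    fst.comp (Primrec.unpair.comp hl)
  have hp : Primrec fun IH : List (Option Code) => IH.length.unpair.2 :=
    snd.comp (Primrec.unpair.comp hl)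
  have hp1 : Primrec fun IH : List (Option Code) => IH.length.unpair.2.unpair.1 :=
    fst.comp (Primrec.unpair.comp hp)
  have hp2 : Primrec fun IH : List (Option Code) => IH.length.unpair.2.unpair.2 :=
    snd.comp (Primrec.unpair.comp hp)
  have hA1 : Primrec fun IH : List (Option Code) => IH.getD IH.length.unpair.2.unpair.1 none :=
    (list_getD none).comp .id hp1
  have hA2 : Primrec fun IH : List (Option Code) => IH.getD IH.length.unpair.2.unpair.2 none :=
    (list_getD none).comp .id hp2
  have hAp : Primrec fun IH : List (Option Code) => IH.getD IH.length.unpair.2 none :=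
    (list_getD none).comp .id hp
  have heq : ∀ m : ℕ, PrimrecPred fun IH : List (Option Code) => IH.length.unpair.1 = m :=
    fun m => Primrec.eq.comp ht (const m)
  have heqp : PrimrecPred fun IH : List (Option Code) => IH.length.unpair.2 = 0 :=
    Primrec.eq.comp hp (const 0)
  have hconst : ∀ k : Option Code,
      Primrec fun IH : List (Option Code) =>
        (if IH.length.unpair.2 = 0 then k else none) :=
    fun k => Primrec.ite heqp (const k) (const none)
  have hbin : ∀ F : Code → Code → Code, Primrec₂ F →
      Primrec fun IH : List (Option Code) =>
        some ((IH.getD IH.length.unpair.2.unpair.1 none).bind fun a =>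
          (IH.getD IH.length.unpair.2.unpair.2 none).map fun b => F a b) := by
    intro F hF
    exact option_some.comp <| option_bind hA1 <|
      (option_map (hA2.comp fst) ((hF.comp (snd.comp fst) snd).to₂)).to₂
  refine Primrec.ite ((heq 0).or (heq 4)) (option_some.comp (hconst (some Code.zero))) ?_
  refine Primrec.ite (heq 1) (option_some.comp (hconst (some Code.succ))) ?_
  refine Primrec.ite (heq 2) (option_some.comp (hconst (some Code.left))) ?_
  refine Primrec.ite (heq 3) (option_some.comp (hconst (some Code.right))) ?_
  refine Primrec.ite (heq 5) (hbin _ primrec₂_pair) ?_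
  refine Primrec.ite (heq 6) (hbin _ primrec₂_comp) ?_
  refine Primrec.ite (heq 7) (hbin _ primrec₂_prec) ?_
  refine Primrec.ite (heq 8) ?_ (const (some none))
  exact option_some.comp <| option_map hAp <|
    ((primrec₂_comp.comp (primrec_rfind'.comp snd)
      (const (Code.pair Code.id Code.zero))).to₂)

theorem ocDec_primrec : Primrec ocDec := by
  have := Primrec.nat_strong_rec (fun _ : Unit => ocDec)
    ((ocDecG_primrec.comp Primrec.snd).to₂) (fun _ n => ocDecG_spec n)
  exact this.comp (Primrec.const ()) Primrec.id

theorem dcode_primrec : Primrec dcode :=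
  Primrec.option_getD.comp ocDec_primrec (Primrec.const divergeC)

/-! ### Universality -/

theorem phi_eval_partrec : Partrec fun p : ℕ × ℕ => phi (chOracle ∅) p.1 p.2 := by
  have h := eval_part.comp
    ((dcode_primrec.to_comp).comp (Computable.fst)) (Computable.snd)
  exact h.of_eq fun p => by rw [eval_dcode]

theorem diag_partrec : Nat.Partrec fun e => phi (chOracle ∅) e e := by
  refine Partrec.nat_iff.1 ?_
  exact phi_eval_partrec.comp (Computable.id.pair Computable.id)

/-! ### The DNC property and the easy implications -/

/-- `X` computes a diagonally non-computable function. -/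
def DNCp (X : Set ℕ) : Prop :=
  ∃ f : ℕ → ℕ, RecIn (chOracle X) (fnOracle f) ∧
    ∀ e : ℕ, f e ∉ phi (chOracle ∅) e e

/-- A code computing the constant function with value `x`. -/
def constC : ℕ → OCode
  | 0 => .zero
  | x + 1 => .comp .succ (constC x)

theorem eval_constC (O : ℕ →. ℕ) : ∀ x n : ℕ, (constC x).eval O n = Part.some x := by
  intro x
  induction x with
  | zero => intro n; rfl
  | succ x ih =>
    intro n
    show ((constC x).eval O n).bind _ = _
    rw [ih n]
    simp [OCode.eval, pbind_some']

/-- `Nat.rec` form of `fun x => (constC x).encodeC`. -/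
def encCn : ℕ → ℕ :=
  Nat.rec (Nat.pair 0 0) fun _ ih => Nat.pair 6 (Nat.pair (Nat.pair 1 0) ih)

theorem encCn_eq : ∀ x, encCn x = (constC x).encodeC := by
  intro x
  induction x with
  | zero => rfl
  | succ x ih => show Nat.pair 6 (Nat.pair (Nat.pair 1 0) (encCn x)) = _; rw [ih]; rfl

theorem encCn_primrec : Primrec encCn :=
  Primrec.nat_rec₁ (Nat.pair 0 0)
    ((Primrec₂.natPair.comp (Primrec.const 6)
      (Primrec₂.natPair.comp (Primrec.const (Nat.pair 1 0)) Primrec.snd)).to₂)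

theorem dnc_to_avoid {X : Set ℕ} (hX : DNCp X) :
    ∀ g : ℕ →. ℕ, RecIn (chOracle ∅) g →
      ∃ f : ℕ → ℕ, RecIn (chOracle X) (fnOracle f) ∧ ∀ x : ℕ, f x ∉ g x := by
  obtain ⟨f₀, hf₀, hdnc⟩ := hX
  intro g hg
  obtain ⟨cg, hcg⟩ := hg
  set k : ℕ → ℕ := fun x => Nat.pair 6 (Nat.pair cg.encodeC (encCn x)) with hk
  have hkenc : ∀ x, k x = (OCode.comp cg (constC x)).encodeC := by
    intro x
    rw [hk]
    show Nat.pair 6 (Nat.pair cg.encodeC (encCn x)) = Nat.pair 6 _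
    rw [encCn_eq]
  have hkcomp : Computable k :=
    (Primrec₂.natPair.comp (Primrec.const 6)
      (Primrec₂.natPair.comp (Primrec.const cg.encodeC)
        (encCn_primrec))).to_comp
  have hphik : ∀ x z : ℕ, phi (chOracle ∅) (k x) z = g x := by
    intro x z
    rw [hkenc, phi_encodeC]
    show ((constC x).eval _ z).bind (cg.eval _) = _
    rw [eval_constC]
    simp [hcg, pbind_some']
  refine ⟨fun x => f₀ (k x), recIn_fn_comp hf₀ (recIn_fnOracle_of_computable hkcomp), ?_⟩
  intro x hmem
  exact hdnc (k x) ((hphik x (k x)).symm ▸ hmem)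

theorem avoid_to_dnc {X : Set ℕ}
    (h : ∀ g : ℕ →. ℕ, RecIn (chOracle ∅) g →
      ∃ f : ℕ → ℕ, RecIn (chOracle X) (fnOracle f) ∧ ∀ x : ℕ, f x ∉ g x) :
    DNCp X := by
  obtain ⟨f, hf, hav⟩ := h (fun e => phi (chOracle ∅) e e) (recIn_of_partrec diag_partrec)
  exact ⟨f, hf, hav⟩

theorem escape_to_dnc {X : Set ℕ}
    (h : ∀ F : ℕ → Set ℕ, (∀ e, (F e).Finite) →
      (∃ c : ℕ, ∀ p : ℕ, (phi (chOracle ∅) c p).Dom ↔ p.unpair.2 ∈ F p.unpair.1) →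
      ∃ h : ℕ → ℕ → ℕ, RecIn (chOracle X) (pairFnOracle h) ∧
        ∀ e n : ℕ, (F e).ncard ≤ n → h e n ∉ F e) :
    DNCp X := by
  set F : ℕ → Set ℕ := fun e => {v | v ∈ phi (chOracle ∅) e e} with hF
  have hsub : ∀ e, (F e).Subsingleton := by
    intro e v hv w hw
    exact Part.mem_unique hv hw
  have hfin : ∀ e, (F e).Finite := fun e => (hsub e).finite
  have hncard : ∀ e, (F e).ncard ≤ 1 := by
    intro e
    rcases (F e).eq_empty_or_nonempty with he | ⟨v, hv⟩
    · simp [he]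
    · rw [(hsub e).eq_singleton_of_mem hv]
      simp
  -- the code testing membership
  have hψ : Partrec fun p : ℕ => (phi (chOracle ∅) p.unpair.1 p.unpair.1).bind
      fun v => ((if v = p.unpair.2 then some 0 else none : Option ℕ) : Part ℕ) := by
    refine Partrec.bind ?_ ?_
    · exact phi_eval_partrec.comp
        ((Primrec.fst.comp Primrec.unpair).to_comp.pair
          (Primrec.fst.comp Primrec.unpair).to_comp)
    · refine Computable.ofOption ?_
      refine Primrec.to_comp ?_
      refine Primrec.ite (Primrec.eq.comp Primrec.snd
        (Primrec.snd.comp (Primrec.unpair.comp Primrec.fst))) ?_ ?_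
      · exact Primrec.const _
      · exact Primrec.const _
  have hcode : ∃ c : ℕ, ∀ p : ℕ, (phi (chOracle ∅) c p).Dom ↔ p.unpair.2 ∈ F p.unpair.1 := by
    obtain ⟨oc, hoc⟩ := recIn_of_partrec (O := chOracle ∅) (Partrec.nat_iff.1 hψ)
    refine ⟨oc.encodeC, ?_⟩
    intro p
    rw [phi_encodeC, hoc]
    rw [Part.dom_iff_mem]
    constructor
    · rintro ⟨a, ha⟩
      obtain ⟨v, hv, haf⟩ := Part.mem_bind_iff.1 ha
      by_cases hvp : v = p.unpair.2
      · exact hvp ▸ hv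
      · rw [if_neg hvp] at haf
        simp [Part.ofOption] at haf
    · intro hmem
      refine ⟨0, Part.mem_bind_iff.2 ⟨p.unpair.2, hmem, ?_⟩⟩
      simp
  obtain ⟨h2, hrec, hesc⟩ := h F hfin hcode
  refine ⟨fun e => h2 e 1, ?_, ?_⟩
  · have : RecIn (chOracle X) (fnOracle fun m => h2 m.unpair.1 m.unpair.2) := hrec
    have h3 := recIn_fn_comp this
      (recIn_fnOracle_of_computable
        ((Primrec₂.natPair.comp Primrec.id (Primrec.const 1)).to_comp))
    refine h3.imp fun c hc => hc.trans ?_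
    funext n
    simp [fnOracle, Nat.unpair_pair]
  · intro e hmem
    exact hesc e 1 (hncard e) hmem

/-! ### Escaping uniformly c.e. finite sets: computable infrastructure -/

/-- `cntA CC u s b j` counts `b' < j` that are "special" (first unpair component `u`)
and entered before `b` in the stage-order given by `evaln` with code `CC`. -/
def cntA (CC : Code) (u s b j : ℕ) : ℕ :=
  Nat.rec 0 (fun k acc => acc +
    if k.unpair.1 = u ∧ ((evaln (s - 1) CC (Nat.pair u.unpair.1 k)).isSome = true ∨
        ((evaln s CC (Nat.pair u.unpair.1 k)).isSome = true ∧ k < b))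
    then 1 else 0) j

/-- The witness-checking function for the escaping construction. -/
def WF (CC : Code) (x w : ℕ) : Option ℕ :=
  if w.unpair.2.unpair.1 = x.unpair.1
      ∧ (evaln w.unpair.1 CC (Nat.pair x.unpair.1.unpair.1 w.unpair.2)).isSome = true
      ∧ ¬((evaln (w.unpair.1 - 1) CC (Nat.pair x.unpair.1.unpair.1 w.unpair.2)).isSome = true)
      ∧ cntA CC x.unpair.1 w.unpair.1 w.unpair.2 w.unpair.1 = x.unpair.2
  then some ((Denumerable.ofNat (List ℕ) w.unpair.2.unpair.2).getD x.unpair.2 0)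
  else none

/-- The partial function to be avoided. -/
def gfun (CC : Code) : ℕ →. ℕ := fun x => Nat.rfindOpt (WF CC x)

open Primrec in
theorem evalnIsSome_primrec (CC : Code) :
    Primrec fun p : ℕ × ℕ => (evaln p.1 CC p.2).isSome :=
  option_isSome.comp (primrec_evaln.comp ((fst.pair (const CC)).pair snd))

open Primrec in
theorem cntA_primrec (CC : Code) :
    Primrec fun p : ℕ × ℕ => cntA CC p.1.unpair.1 p.2.unpair.1 p.2.unpair.2 p.2.unpair.1 := by
  have hu : Primrec fun p : ℕ × ℕ => p.1.unpair.1 := fst.comp (Primrec.unpair.comp fst)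
  have hs : Primrec fun p : ℕ × ℕ => p.2.unpair.1 := fst.comp (Primrec.unpair.comp snd)
  refine (Primrec.nat_rec' hs (const 0)
    (h := fun (q : (ℕ × ℕ)) (kp : ℕ × ℕ) => kp.2 +
      if kp.1.unpair.1 = q.1.unpair.1 ∧
          ((evaln (q.2.unpair.1 - 1) CC (Nat.pair q.1.unpair.1.unpair.1 kp.1)).isSome = true ∨
            ((evaln q.2.unpair.1 CC (Nat.pair q.1.unpair.1.unpair.1 kp.1)).isSome = true ∧
              kp.1 < q.2.unpair.2))
      then 1 else 0) ?_).of_eq fun a => rfl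
  have hk : Primrec fun q : (ℕ × ℕ) × ℕ × ℕ => q.2.1 := fst.comp snd
  have hacc : Primrec fun q : (ℕ × ℕ) × ℕ × ℕ => q.2.2 := snd.comp snd
  have hu' : Primrec fun q : (ℕ × ℕ) × ℕ × ℕ => q.1.1.unpair.1 :=
    fst.comp (Primrec.unpair.comp (fst.comp fst))
  have hs' : Primrec fun q : (ℕ × ℕ) × ℕ × ℕ => q.1.2.unpair.1 :=
    fst.comp (Primrec.unpair.comp (snd.comp fst))
  have hb' : Primrec fun q : (ℕ × ℕ) × ℕ × ℕ => q.1.2.unpair.2 :=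
    snd.comp (Primrec.unpair.comp (snd.comp fst))
  have he' : Primrec fun q : (ℕ × ℕ) × ℕ × ℕ => q.1.1.unpair.1.unpair.1 :=
    fst.comp (Primrec.unpair.comp hu')
  have hm : Primrec fun q : (ℕ × ℕ) × ℕ × ℕ => Nat.pair q.1.1.unpair.1.unpair.1 q.2.1 :=
    Primrec₂.natPair.comp he' hk
  have hcond1 : PrimrecPred fun q : (ℕ × ℕ) × ℕ × ℕ => q.2.1.unpair.1 = q.1.1.unpair.1 :=
    Primrec.eq.comp (fst.comp (Primrec.unpair.comp hk)) hu'
  have hcondA : PrimrecPred fun q : (ℕ × ℕ) × ℕ × ℕ =>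
      (evaln (q.1.2.unpair.1 - 1) CC (Nat.pair q.1.1.unpair.1.unpair.1 q.2.1)).isSome = true :=
    Primrec.eq.comp ((evalnIsSome_primrec CC).comp ((nat_sub.comp hs' (const 1)).pair hm))
      (const true)
  have hcondB : PrimrecPred fun q : (ℕ × ℕ) × ℕ × ℕ =>
      (evaln q.1.2.unpair.1 CC (Nat.pair q.1.1.unpair.1.unpair.1 q.2.1)).isSome = true :=
    Primrec.eq.comp ((evalnIsSome_primrec CC).comp (hs'.pair hm)) (const true)
  have hcondC : PrimrecPred fun q : (ℕ × ℕ) × ℕ × ℕ => q.2.1 < q.1.2.unpair.2 :=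
    nat_lt.comp hk hb'
  refine Primrec₂.mk ?_
  exact nat_add.comp hacc
    (Primrec.ite (hcond1.and (hcondA.or (hcondB.and hcondC))) (const 1) (const 0))

open Primrec in
theorem WF_primrec (CC : Code) : Primrec₂ (WF CC) := by
  have hx : Primrec fun p : ℕ × ℕ => p.1 := fst
  have hw : Primrec fun p : ℕ × ℕ => p.2 := snd
  have hs : Primrec fun p : ℕ × ℕ => p.2.unpair.1 := fst.comp (Primrec.unpair.comp snd)
  have hb : Primrec fun p : ℕ × ℕ => p.2.unpair.2 := snd.comp (Primrec.unpair.comp snd)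
  have hu : Primrec fun p : ℕ × ℕ => p.1.unpair.1 := fst.comp (Primrec.unpair.comp fst)
  have hi : Primrec fun p : ℕ × ℕ => p.1.unpair.2 := snd.comp (Primrec.unpair.comp fst)
  have he : Primrec fun p : ℕ × ℕ => p.1.unpair.1.unpair.1 :=
    fst.comp (Primrec.unpair.comp hu)
  have hm : Primrec fun p : ℕ × ℕ => Nat.pair p.1.unpair.1.unpair.1 p.2.unpair.2 :=
    Primrec₂.natPair.comp he hb
  have hcond0 : PrimrecPred fun p : ℕ × ℕ => p.2.unpair.2.unpair.1 = p.1.unpair.1 :=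
    Primrec.eq.comp (fst.comp (Primrec.unpair.comp hb)) hu
  have hcond1 : PrimrecPred fun p : ℕ × ℕ =>
      (evaln p.2.unpair.1 CC (Nat.pair p.1.unpair.1.unpair.1 p.2.unpair.2)).isSome = true :=
    Primrec.eq.comp ((evalnIsSome_primrec CC).comp (hs.pair hm)) (const true)
  have hcond2 : PrimrecPred fun p : ℕ × ℕ =>
      ¬((evaln (p.2.unpair.1 - 1) CC
        (Nat.pair p.1.unpair.1.unpair.1 p.2.unpair.2)).isSome = true) :=
    PrimrecPred.not (Primrec.eq.comp
      ((evalnIsSome_primrec CC).comp ((nat_sub.comp hs (const 1)).pair hm)) (const true))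
  have hcond3 : PrimrecPred fun p : ℕ × ℕ =>
      cntA CC p.1.unpair.1 p.2.unpair.1 p.2.unpair.2 p.2.unpair.1 = p.1.unpair.2 :=
    Primrec.eq.comp (cntA_primrec CC) hi
  have hval : Primrec fun p : ℕ × ℕ =>
      (Denumerable.ofNat (List ℕ) p.2.unpair.2.unpair.2).getD p.1.unpair.2 0 :=
    (list_getD 0).comp ((Primrec.ofNat (List ℕ)).comp (snd.comp (Primrec.unpair.comp hb))) hi
  refine Primrec₂.mk ?_
  exact Primrec.ite (hcond0.and (hcond1.and (hcond2.and hcond3)))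
    (option_some.comp hval) (const none)

theorem gfun_partrec (CC : Code) : Partrec (gfun CC) :=
  Partrec.rfindOpt ((WF_primrec CC).to_comp)

/-! ### Building the escape function relative to the oracle -/

/-- Reversed list of values `f (Nat.pair q k)` for `k < j`, encoded as a natural number. -/
def rlist (f : ℕ → ℕ) (q : ℕ) : ℕ → ℕ :=
  Nat.rec 0 fun k acc => Nat.succ (Nat.pair (f (Nat.pair q k)) acc)

/-- The code (relative to the oracle computing `f`) building `rlist`. -/
def rlistCode : OCode :=
  .prec .zero (.comp .succ (.pair (.comp .oracle (.pair .left (.comp .left .right)))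
    (.comp .right .right)))

theorem evalPrecO (O : ℕ →. ℕ) (a b : OCode) (q j : ℕ) :
    (OCode.prec a b).eval O (Nat.pair q j) =
      j.rec (a.eval O q) (fun y IH => IH.bind fun i => b.eval O (Nat.pair q (Nat.pair y i))) := by
  have h : (OCode.prec a b).eval O (Nat.pair q j) = Nat.unpaired (fun m n =>
      n.rec (a.eval O m) fun y IH => do let i ← IH; b.eval O (Nat.pair m (Nat.pair y i)))
      (Nat.pair q j) := rfl
  rw [h]
  simp [Nat.unpaired, Nat.unpair_pair]

theorem evalPrecO_zero (O : ℕ →. ℕ) (a b : OCode) (q : ℕ) :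
    (OCode.prec a b).eval O (Nat.pair q 0) = a.eval O q := by
  rw [evalPrecO]; rfl

theorem evalPrecO_succ (O : ℕ →. ℕ) (a b : OCode) (q j : ℕ) :
    (OCode.prec a b).eval O (Nat.pair q (j + 1)) =
      ((OCode.prec a b).eval O (Nat.pair q j)).bind
        (fun i => b.eval O (Nat.pair q (Nat.pair j i))) := by
  rw [evalPrecO, evalPrecO]

theorem eval_rlistCode (f : ℕ → ℕ) (q : ℕ) : ∀ j : ℕ,
    rlistCode.eval (fnOracle f) (Nat.pair q j) = Part.some (rlist f q j)
  | 0 => by rw [rlistCode, evalPrecO_zero]; rfl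
  | (j + 1) => by
      rw [rlistCode, evalPrecO_succ, ← rlistCode, eval_rlistCode f q j, Part.bind_some]
      show Part.bind _ _ = _
      simp only [OCode.eval, Seq.seq, fnOracle, Nat.unpair_pair, Part.bind_some,
        Part.map_some, Part.bind_map, Part.map_bind]
      simp [Nat.unpair_pair, fnOracle, Part.bind_some, pbind_some, pbind_some']
      rfl

theorem rlist_eq (f : ℕ → ℕ) (q : ℕ) : ∀ j,
    rlist f q j = Encodable.encode (((List.range j).map fun k => f (Nat.pair q k)).reverse) := by
  intro j
  induction j with
  | zero => rfl
  | succ j ih =>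
    show Nat.succ (Nat.pair (f (Nat.pair q j)) (rlist f q j)) = _
    rw [ih, List.range_succ]
    simp [Encodable.encode_list_cons]

/-- The escape function built from `f`. -/
def hesc (f : ℕ → ℕ) (e n : ℕ) : ℕ :=
  Nat.pair (Nat.pair e n)
    (Encodable.encode ((List.range (n + 1)).map fun j => f (Nat.pair (Nat.pair e n) j)))

theorem recIn_hesc {O : ℕ →. ℕ} {f : ℕ → ℕ} (hf : RecIn O (fnOracle f)) :
    RecIn O (pairFnOracle (hesc f)) := by
  have hrl : RecIn (fnOracle f) (fnOracle fun m => rlist f m (m.unpair.2 + 1)) := by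
    refine ⟨.comp rlistCode (.pair (.pair .left .right) (.comp .succ .right)), ?_⟩
    funext m
    show (OCode.eval _ (.pair (.pair .left .right) (.comp .succ .right)) m).bind _ = _
    have h1 : OCode.eval (fnOracle f) (.pair (.pair .left .right) (.comp .succ .right)) m
        = Part.some (Nat.pair m (m.unpair.2 + 1)) := by
      simp [OCode.eval, Seq.seq, Nat.pair_unpair, pbind_some]
    rw [h1]
    simp [eval_rlistCode, fnOracle, pbind_some']
  have hpost : Computable fun t => Encodable.encode ((Denumerable.ofNat (List ℕ) t).reverse) :=
    (Primrec.encode.comp (Primrec.list_reverse.comp (Primrec.ofNat (List ℕ)))).to_comp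
  have h2 : RecIn (fnOracle f)
      (fnOracle fun m => Encodable.encode
        ((Denumerable.ofNat (List ℕ) (rlist f m (m.unpair.2 + 1))).reverse)) :=
    recIn_fn_comp (recIn_fnOracle_of_computable hpost) hrl
  have hpair : RecIn (fnOracle f) (fnOracle fun m =>
      Nat.pair m (Encodable.encode
        ((Denumerable.ofNat (List ℕ) (rlist f m (m.unpair.2 + 1))).reverse))) := by
    obtain ⟨c2, hc2⟩ := h2
    refine ⟨.pair (.pair .left .right) c2, ?_⟩
    funext m
    show Nat.pair <$> _ <*> _ = _
    simp [OCode.eval, hc2, Seq.seq, Nat.pair_unpair, fnOracle]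
  have heq : (fnOracle fun m =>
      Nat.pair m (Encodable.encode
        ((Denumerable.ofNat (List ℕ) (rlist f m (m.unpair.2 + 1))).reverse)))
      = pairFnOracle (hesc f) := by
    funext m
    have : Nat.pair m.unpair.1 m.unpair.2 = m := Nat.pair_unpair m
    simp only [fnOracle, pairFnOracle, hesc, this]
    rw [rlist_eq]
    simp [Denumerable.ofNat_encode]
  exact recIn_trans (heq ▸ hpair) hf

/-! ### The main escaping lemma -/

theorem avoid_to_escape {X : Set ℕ}
    (h : ∀ g : ℕ →. ℕ, RecIn (chOracle ∅) g →
      ∃ f : ℕ → ℕ, RecIn (chOracle X) (fnOracle f) ∧ ∀ x : ℕ, f x ∉ g x) :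
    ∀ F : ℕ → Set ℕ, (∀ e, (F e).Finite) →
      (∃ c : ℕ, ∀ p : ℕ, (phi (chOracle ∅) c p).Dom ↔ p.unpair.2 ∈ F p.unpair.1) →
      ∃ h2 : ℕ → ℕ → ℕ, RecIn (chOracle X) (pairFnOracle h2) ∧
        ∀ e n : ℕ, (F e).ncard ≤ n → h2 e n ∉ F e := by
  intro F hfin hcode
  obtain ⟨c, hc⟩ := hcode
  set CC := dcode c with hCC
  have hdom : ∀ e v : ℕ, v ∈ F e ↔ (CC.eval (Nat.pair e v)).Dom := by
    intro e v
    rw [hCC, eval_dcode]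
    have := hc (Nat.pair e v)
    simp only [Nat.unpair_pair] at this
    exact this.symm
  obtain ⟨f, hfrec, hav⟩ := h (gfun CC) (recIn_of_partrec (Partrec.nat_iff.1 (gfun_partrec CC)))
  refine ⟨hesc f, recIn_hesc hfrec, ?_⟩
  intro e n hn hbmem
  set u := Nat.pair e n with hu
  set L : List ℕ := (List.range (n + 1)).map fun j => f (Nat.pair u j) with hL
  set t := Encodable.encode L with ht
  set b := Nat.pair u t with hb
  have hbmem' : b ∈ F e := hbmem
  have hue : u.unpair.1 = e := by rw [hu, Nat.unpair_pair]
  set E : ℕ → ℕ → Prop := fun s v => (evaln s CC (Nat.pair e v)).isSome = true with hE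
  have hentered : ∀ v : ℕ, v ∈ F e → ∃ s, E s v := by
    intro v hv
    have hd := (hdom e v).1 hv
    obtain ⟨s, hs⟩ := evaln_complete.1 (Part.get_mem hd)
    exact ⟨s, Option.isSome_iff_exists.2 ⟨_, hs⟩⟩
  have hEmono : ∀ {s s' v}, s ≤ s' → E s v → E s' v := by
    intro s s' v hss hEs
    obtain ⟨a, ha⟩ := Option.isSome_iff_exists.1 hEs
    exact Option.isSome_iff_exists.2 ⟨a, evaln_mono hss ha⟩
  have hEF : ∀ {s v}, E s v → v ∈ F e := by
    intro s v hEs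
    obtain ⟨a, ha⟩ := Option.isSome_iff_exists.1 hEs
    exact (hdom e v).2 (Part.dom_iff_mem.2 ⟨a, evaln_sound ha⟩)
  have hE0 : ∀ v, ¬ E 0 v := by
    intro v hv
    obtain ⟨a, ha⟩ := Option.isSome_iff_exists.1 hv
    exact absurd (evaln_bound ha) (Nat.not_lt_zero _)
  set st : ℕ → ℕ := fun v => sInf {s | E s v} with hst
  have hstE : ∀ v, v ∈ F e → E (st v) v := fun v hv => Nat.sInf_mem (hentered v hv)
  have hstle : ∀ {v s}, E s v → st v ≤ s := fun {v s} hEs => Nat.sInf_le hEs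
  have hstpos : ∀ v, v ∈ F e → 0 < st v := by
    intro v hv
    rcases Nat.eq_zero_or_pos (st v) with h0 | hp
    · exact absurd (h0 ▸ hstE v hv) (hE0 v)
    · exact hp
  have hstmin : ∀ {v s}, v ∈ F e → s < st v → ¬ E s v :=
    fun {v s} _ hlt hEs => absurd (hstle hEs) (by omega)
  set S : Set ℕ := {v | v.unpair.1 = u ∧ v ∈ F e} with hS
  have hSfin : S.Finite := (hfin e).subset fun v hv => hv.2
  set keylt : ℕ → ℕ → Prop := fun v w => st v < st w ∨ (st v = st w ∧ v < w) with hkey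
  have hkeytrans : ∀ {a b' c'}, keylt a b' → keylt b' c' → keylt a c' := by
    intro a b' c' h1 h2
    rw [hkey] at h1 h2 ⊢
    omega
  have hkeyirrefl : ∀ v, ¬ keylt v v := by
    intro v
    rw [hkey]
    omega
  have hkeytotal : ∀ v w, v ≠ w → keylt v w ∨ keylt w v := by
    intro v w hvw
    simp only [hkey]
    omega
  set K : ℕ → Set ℕ := fun v => {w | w ∈ S ∧ keylt w v} with hK
  have hKfin : ∀ v, (K v).Finite := fun v => hSfin.subset fun w hw => hw.1
  -- counting formula
  have hcnt : ∀ s v j : ℕ, cntA CC u s v j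
      = {w : ℕ | w < j ∧ w.unpair.1 = u ∧ (E (s - 1) w ∨ (E s w ∧ w < v))}.ncard := by
    intro s v j
    induction j with
    | zero =>
      have hempty : {w : ℕ | w < 0 ∧ w.unpair.1 = u ∧ (E (s - 1) w ∨ (E s w ∧ w < v))} = ∅ := by
        ext w; simp
      rw [hempty]
      simp [cntA]
    | succ j ih =>
      have hstep : cntA CC u s v (j + 1) = cntA CC u s v j +
          (if j.unpair.1 = u ∧ ((evaln (s - 1) CC (Nat.pair u.unpair.1 j)).isSome = true ∨
              ((evaln s CC (Nat.pair u.unpair.1 j)).isSome = true ∧ j < v))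
           then 1 else 0) := rfl
      rw [hstep, ih]
      by_cases hQ : j.unpair.1 = u ∧ (E (s - 1) j ∨ (E s j ∧ j < v))
      · rw [if_pos (by rw [hue]; exact hQ)]
        have hins : {w : ℕ | w < j + 1 ∧ w.unpair.1 = u ∧ (E (s - 1) w ∨ (E s w ∧ w < v))}
            = insert j {w : ℕ | w < j ∧ w.unpair.1 = u ∧ (E (s - 1) w ∨ (E s w ∧ w < v))} := by
          ext w
          simp only [Set.mem_setOf_eq, Set.mem_insert_iff]
          constructor
          · rintro ⟨hlt, hrest⟩
            rcases Nat.lt_succ_iff_lt_or_eq.1 hlt with hlt' | rfl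
            · exact Or.inr ⟨hlt', hrest⟩
            · exact Or.inl rfl
          · rintro (rfl | ⟨hlt, hrest⟩)
            · exact ⟨Nat.lt_succ_self _, hQ⟩
            · exact ⟨by omega, hrest⟩
        rw [hins, Set.ncard_insert_of_notMem (fun hmem => by
            exact absurd hmem.1 (lt_irrefl j))
          ((Set.finite_Iio j).subset fun w hw => hw.1)]
      · rw [if_neg (by rw [hue]; exact hQ)]
        have hsame : {w : ℕ | w < j + 1 ∧ w.unpair.1 = u ∧ (E (s - 1) w ∨ (E s w ∧ w < v))}
            = {w : ℕ | w < j ∧ w.unpair.1 = u ∧ (E (s - 1) w ∨ (E s w ∧ w < v))} := by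
          ext w
          simp only [Set.mem_setOf_eq]
          constructor
          · rintro ⟨hlt, hrest⟩
            rcases Nat.lt_succ_iff_lt_or_eq.1 hlt with hlt' | rfl
            · exact ⟨hlt', hrest⟩
            · exact absurd hrest hQ
          · rintro ⟨hlt, hrest⟩
            exact ⟨by omega, hrest⟩
        rw [hsame, Nat.add_zero]
  -- the truncated set equals `K v` for the right stage
  have hseteq : ∀ v, v ∈ F e →
      {w : ℕ | w < st v ∧ w.unpair.1 = u ∧ (E (st v - 1) w ∨ (E (st v) w ∧ w < v))} = K v := by
    intro v hvF
    have hsv := hstpos v hvF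
    ext w
    simp only [hK, hS, Set.mem_setOf_eq, hkey]
    constructor
    · rintro ⟨hwlt, hw1, hcase⟩
      rcases hcase with hc1 | ⟨hc2, hwv⟩
      · have hwF : w ∈ F e := hEF hc1
        have hle : st w ≤ st v - 1 := hstle hc1
        exact ⟨⟨hw1, hwF⟩, Or.inl (by omega)⟩
      · have hwF : w ∈ F e := hEF hc2
        have hle : st w ≤ st v := hstle hc2
        rcases eq_or_lt_of_le hle with heq | hlt
        · exact ⟨⟨hw1, hwF⟩, Or.inr ⟨heq, hwv⟩⟩
        · exact ⟨⟨hw1, hwF⟩, Or.inl hlt⟩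
    · rintro ⟨⟨hw1, hwF⟩, hkeyc⟩
      have hwE : E (st w) w := hstE w hwF
      have hbound : Nat.pair e w < st w := by
        obtain ⟨a', ha'⟩ := Option.isSome_iff_exists.1 hwE
        exact evaln_bound ha'
      have hwlt_st : w < st w := lt_of_le_of_lt (Nat.right_le_pair e w) hbound
      rcases hkeyc with hlt | ⟨heq, hwv⟩
      · exact ⟨by omega, hw1, Or.inl (hEmono (by omega) hwE)⟩
      · exact ⟨by omega, hw1, Or.inr ⟨hEmono (by omega) hwE, hwv⟩⟩
  -- guard characterization
  have hguard : ∀ i s v a : ℕ, WF CC (Nat.pair u i) (Nat.pair s v) = some a →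
      v ∈ S ∧ s = st v ∧ (K v).ncard = i ∧
        a = (Denumerable.ofNat (List ℕ) v.unpair.2).getD i 0 := by
    intro i s v a hW
    rw [WF] at hW
    simp only [Nat.unpair_pair, hue] at hW
    split_ifs at hW with hg
    · obtain ⟨hg1, hg2, hg3, hg4⟩ := hg
      have hg2' : E s v := hg2
      have hvF : v ∈ F e := hEF hg2'
      have hvS : v ∈ S := ⟨hg1, hvF⟩
      have hsst : s = st v := by
        have h1 : st v ≤ s := hstle hg2'
        rcases eq_or_lt_of_le h1 with heq | hlt
        · omega
        · exfalso
          have h2 : st v ≤ s - 1 := by omega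
          exact hg3 (hEmono h2 (hstE v hvF))
      have hKv : (K v).ncard = i := by
        rw [hcnt] at hg4
        rw [← hg4, hsst, hseteq v hvF]
      exact ⟨hvS, hsst, hKv, (Option.some.inj hW).symm⟩
  -- uniqueness
  have hkeycard : ∀ v₁ v₂, v₁ ∈ S → v₂ ∈ S → keylt v₁ v₂ → (K v₁).ncard < (K v₂).ncard := by
    intro v₁ v₂ h1 h2 hk12
    refine Set.ncard_lt_ncard ⟨fun w hw => ⟨hw.1, hkeytrans hw.2 hk12⟩, fun hcon => ?_⟩
      (hKfin v₂)
    exact hkeyirrefl v₁ (hcon ⟨h1, hk12⟩).2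
  have huniq : ∀ v₁ v₂, v₁ ∈ S → v₂ ∈ S → (K v₁).ncard = (K v₂).ncard → v₁ = v₂ := by
    intro v₁ v₂ h1 h2 hcard
    by_contra hne
    rcases hkeytotal v₁ v₂ hne with hk | hk
    · exact absurd hcard (Nat.ne_of_lt (hkeycard _ _ h1 h2 hk))
    · exact absurd hcard.symm (Nat.ne_of_lt (hkeycard _ _ h2 h1 hk))
  -- cardinality bound
  have hbS : b ∈ S := ⟨by rw [hb, Nat.unpair_pair], hbmem'⟩
  set i := (K b).ncard with hi
  have hKb_le : i ≤ n := by
    have hsub : K b ⊆ F e \ {b} := fun w hw =>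
      ⟨hw.1.2, fun hwb => hkeyirrefl b ((Set.mem_singleton_iff.1 hwb) ▸ hw.2)⟩
    have h1 : (K b).ncard ≤ (F e \ {b}).ncard :=
      Set.ncard_le_ncard hsub ((hfin e).subset Set.diff_subset)
    have h2 : (F e \ {b}).ncard = (F e).ncard - 1 :=
      Set.ncard_diff_singleton_of_mem hbmem'
    have h3 : 1 ≤ (F e).ncard := (Set.ncard_pos (hfin e)).2 ⟨b, hbmem'⟩
    omega
  set x := Nat.pair u i with hx
  -- value extraction
  have hgetL : (Denumerable.ofNat (List ℕ) b.unpair.2).getD i 0 = f x := by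
    rw [hb, Nat.unpair_pair, ht, Denumerable.ofNat_encode, hL]
    have hilt : i < n + 1 := by omega
    simp [List.getD_eq_getElem?_getD, List.getElem?_map, List.getElem?_range hilt, hx]
  -- witness
  have hWb : WF CC x (Nat.pair (st b) b) = some (f x) := by
    rw [WF, hx]
    simp only [Nat.unpair_pair, hue]
    rw [if_pos, hgetL]
    refine ⟨by rw [hb, Nat.unpair_pair], hstE b hbmem', ?_, ?_⟩
    · exact hstmin hbmem' (by have := hstpos b hbmem'; omega)
    · rw [hcnt, hseteq b hbmem']
  have hdomx : (gfun CC x).Dom := by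
    rw [gfun]
    exact Nat.rfindOpt_dom.2 ⟨Nat.pair (st b) b, f x, by rw [hWb]; rfl⟩
  have hget : (gfun CC x).get hdomx ∈ gfun CC x := Part.get_mem hdomx
  obtain ⟨w', hw'⟩ := Nat.rfindOpt_spec hget
  have hw'' : WF CC x (Nat.pair w'.unpair.1 w'.unpair.2) = some ((gfun CC x).get hdomx) := by
    rw [Nat.pair_unpair]
    exact hw'
  obtain ⟨hv'S, hs'st, hKi, hval⟩ := hguard i w'.unpair.1 w'.unpair.2 _ hw''
  have hv'b : w'.unpair.2 = b := huniq _ _ hv'S hbS (by rw [hKi])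
  have hfx : (gfun CC x).get hdomx = f x := by
    rw [hval, hv'b, hgetL]
  exact hav x (hfx ▸ hget)

end DNCwork

/-- Characterizations of computing a d.n.c. function: escaping uniformly c.e.
families of finite sets of known size, and diagonalizing against partial
computable functions. -/
theorem stmt3 (X : Set ℕ) :
    ((∃ f : ℕ → ℕ, RecIn (chOracle X) (fnOracle f) ∧
        ∀ e : ℕ, f e ∉ phi (chOracle ∅) e e) ↔
      (∀ F : ℕ → Set ℕ, (∀ e, (F e).Finite) →
        (∃ c : ℕ, ∀ p : ℕ, (phi (chOracle ∅) c p).Dom ↔ p.unpair.2 ∈ F p.unpair.1) →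
        ∃ h : ℕ → ℕ → ℕ, RecIn (chOracle X) (pairFnOracle h) ∧
          ∀ e n : ℕ, (F e).ncard ≤ n → h e n ∉ F e)) ∧
    ((∃ f : ℕ → ℕ, RecIn (chOracle X) (fnOracle f) ∧
        ∀ e : ℕ, f e ∉ phi (chOracle ∅) e e) ↔
      (∀ g : ℕ →. ℕ, RecIn (chOracle ∅) g →
        ∃ f : ℕ → ℕ, RecIn (chOracle X) (fnOracle f) ∧ ∀ x : ℕ, f x ∉ g x)) := by
  constructor
  · constructor
    · intro hi
      exact DNCwork.avoid_to_escape (DNCwork.dnc_to_avoid hi)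
    · intro hii
      exact DNCwork.escape_to_dnc hii
  · constructor
    · intro hi
      exact DNCwork.dnc_to_avoid hi
    · intro hiii
      exact DNCwork.avoid_to_dnc hiii

end
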